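/- Let N be a normal subgroup of a group Γ. Then Φ_f(N), viewed as a subgroup of Γ via the inclusion N ≤ Γ, is contained in Φ_f(Γ). -/

import Mathlib

/-- `phiF G` is the intersection of all maximal subgroups of finite index in `G`
(equal to `G` itself, i.e. `⊤`, if there are no such subgroups). -/
def phiF (G : Type*) [Group G] : Subgroup G :=
  ⨅ M ∈ {M : Subgroup G | IsCoatom M ∧ M.FiniteIndex}, M

lemma phiF_le_mem {G : Type*} [Group G] {M : Subgroup G} (h1 : IsCoatom M)
    (h2 : M.FiniteIndex) : phiF G ≤ M :=
  biInf_le _ ⟨h1, h2⟩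

lemma phiF_le_comap_aut {G : Type*} [Group G] (e : G ≃* G) :
    phiF G ≤ (phiF G).comap e.toMonoidHom := by
  rw [phiF, Subgroup.comap_iInf]
  refine le_iInf fun M => ?_
  rw [Subgroup.comap_iInf]
  refine le_iInf fun hM => ?_
  have h1 : IsCoatom (M.comap e.toMonoidHom) := by
    have := (e.comapSubgroup.isCoatom_iff M).mpr hM.1
    simpa using this
  have h2 : (M.comap e.toMonoidHom).FiniteIndex :=
    ⟨by rw [Subgroup.index_comap_of_surjective _ e.surjective]; exact hM.2.index_ne_zero⟩
  exact phiF_le_mem h1 h2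

lemma phiF_comap_aut {G : Type*} [Group G] (e : G ≃* G) :
    (phiF G).comap e.toMonoidHom = phiF G := by
  refine le_antisymm ?_ (phiF_le_comap_aut e)
  have h := phiF_le_comap_aut e.symm
  have this := Subgroup.comap_mono (f := e.toMonoidHom) h
  have heq : e.symm.toMonoidHom.comp e.toMonoidHom = MonoidHom.id G := by
    ext x; simp
  rw [Subgroup.comap_comap, heq, Subgroup.comap_id] at this
  exact this

lemma phiF_map_normal {Γ : Type*} [Group Γ] (N : Subgroup Γ) [N.Normal] :
    ((phiF N).map N.subtype).Normal := by
  constructor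
  intro x hx γ
  obtain ⟨n, hn, rfl⟩ := hx
  set e : N ≃* N := (MulAut.conjNormal γ : MulAut N)
  have hen : e n ∈ phiF N := by
    have h : n ∈ (phiF N).comap e.toMonoidHom := by
      rw [phiF_comap_aut]; exact hn
    exact h
  exact ⟨e n, hen, by simp [e, MulAut.conjNormal_apply]⟩

lemma exists_coatom_finiteIndex {G : Type*} [Group G] (H : Subgroup G) [H.FiniteIndex]
    (hH : H ≠ ⊤) : ∃ K : Subgroup G, IsCoatom K ∧ K.FiniteIndex ∧ H ≤ K := by
  set S : Set (Subgroup G) := {K | H ≤ K ∧ K ≠ ⊤} with hS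
  have key : ∀ K1 K2 : Subgroup G, H ≤ K2 →
      (QuotientGroup.mk '' (K1 : Set G) : Set (G ⧸ H)) ⊆ QuotientGroup.mk '' (K2 : Set G) →
      K1 ≤ K2 := by
    intro K1 K2 h2 hsub x hx
    obtain ⟨y, hy, hxy⟩ := hsub ⟨x, hx, rfl⟩
    have : y⁻¹ * x ∈ H := (QuotientGroup.eq).mp hxy
    have := mul_mem hy (h2 this)
    simpa using this
  have hfin : S.Finite := by
    have : Finite (G ⧸ H) := Subgroup.finite_quotient_of_finiteIndex (H := H)
    have hinj : Set.InjOn (fun K : Subgroup G =>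
        (QuotientGroup.mk '' (K : Set G) : Set (G ⧸ H))) S := by
      intro K1 h1 K2 h2 heq
      exact le_antisymm (key K1 K2 h2.1 heq.le) (key K2 K1 h1.1 heq.ge)
    exact Set.Finite.of_finite_image (Set.toFinite _) hinj
  obtain ⟨K, hKS, hKmax⟩ := hfin.exists_maximalFor id S ⟨H, le_refl H, hH⟩
  refine ⟨K, ⟨hKS.2, fun b hb => ?_⟩, Subgroup.finiteIndex_of_le hKS.1, hKS.1⟩
  by_contra hbtop
  exact absurd (hKmax ⟨hKS.1.trans hb.le, hbtop⟩ hb.le) hb.not_ge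

/-- If `N` is a normal subgroup of `Γ`, then `Φ_f(N) ≤ Φ_f(Γ)`
(viewing `Φ_f(N)` as a subgroup of `Γ` via the inclusion). -/
theorem phiF_normal_le_phiF {Γ : Type*} [Group Γ] (N : Subgroup Γ) [N.Normal] :
    (phiF N).map N.subtype ≤ phiF Γ := by
  set P := (phiF N).map N.subtype with hPdef
  have hPnormal : P.Normal := phiF_map_normal N
  have hPN : P ≤ N := Subgroup.map_subtype_le _
  refine le_iInf fun M => le_iInf fun hM => ?_
  obtain ⟨hMco, hMfi⟩ := hM
  by_contra hle
  have hMlt : M < P ⊔ M := right_lt_sup.mpr hle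
  have hsup : P ⊔ M = ⊤ := hMco.2 _ hMlt
  haveI : M.FiniteIndex := hMfi
  set H := M.subgroupOf N with hHdef
  have hH : H ≠ ⊤ := by
    intro htop
    exact hle (hPN.trans ((Subgroup.subgroupOf_eq_top).mp htop))
  obtain ⟨K, hKco, hKfi, hHK⟩ := exists_coatom_finiteIndex H hH
  have hphiK : phiF N ≤ K := phiF_le_mem hKco hKfi
  have : (⊤ : Subgroup N) ≤ K := by
    intro n _
    have hmem : (n : Γ) ∈ (↑(P ⊔ M) : Set Γ) := by rw [hsup]; trivial
    rw [Subgroup.normal_mul] at hmem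
    obtain ⟨p, hp, m, hm, hpm⟩ := hmem
    obtain ⟨p', hp', hpp'⟩ := hp
    have hmN : m ∈ N := by
      have : m = p⁻¹ * (n : Γ) := by rw [← hpm]; group
      rw [this]
      exact mul_mem (inv_mem (hPN ⟨p', hp', hpp'⟩)) n.2
    have hmK : (⟨m, hmN⟩ : N) ∈ K := hHK hm
    have hpK : p' ∈ K := hphiK hp'
    have : n = p' * (⟨m, hmN⟩ : N) := by
      apply Subtype.ext
      rw [← hpm, ← hpp']; rfl
    rw [this]
    exact mul_mem hpK hmK
  exact hKco.1 (top_le_iff.mp this)
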